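/- Suppose K decoders are merged by the following round-robin procedure: each decoder k has a ranking function M_k : B x Y -> {1,...,|B|} (a bijection on B for each y), and the merged ranking M_u assigns ranks by scanning (rank j, decoder k) pairs in lexicographic order (j ascending, k ascending), assigning the next unused merged rank to each not-yet-ranked code-tree. Then for every (a, y) in B x Y and every k in {1,...,K}: M_k(a,y) = j implies M_u(a,y) <= (j-1)K + k, and consequently M_u(a,y) <= K * M_k(a,y). -/
import Mathlib


/-- Merging of maximum-likelihood decoders (Feder–Lapidoth, eq. (34) of the paper):
given `K` ranking functions `M_k : B × Y → {1,…,|B|}` (bijective on `B` for each `y`),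
the round-robin merged ranking `M_u` exists, is itself a ranking function, and satisfies
`M_k(a,y) = j → M_u(a,y) ≤ (j-1)K + k` and hence `M_u(a,y) ≤ K · M_k(a,y)`. -/
theorem merged_decoder_ranking {B Y : Type} [Fintype B] [Fintype Y]
    (K : ℕ) (hK : 0 < K)
    (M : Fin K → B → Y → ℕ)
    (hrange : ∀ k (y : Y) (a : B), M k a y ∈ Finset.Icc 1 (Fintype.card B))
    (hinj : ∀ k (y : Y), Function.Injective (fun a => M k a y)) :
    ∃ Mu : B → Y → ℕ,
      (∀ (y : Y) (a : B), Mu a y ∈ Finset.Icc 1 (Fintype.card B)) ∧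
      (∀ y : Y, Function.Injective (fun a => Mu a y)) ∧
      (∀ (a : B) (y : Y) (k : Fin K),
        Mu a y ≤ (M k a y - 1) * K + (k.val + 1)) ∧
      (∀ (a : B) (y : Y) (k : Fin K), Mu a y ≤ K * M k a y) := by
  classical
  haveI : Nonempty (Fin K) := ⟨⟨0, hK⟩⟩
  have hne : (Finset.univ : Finset (Fin K)).Nonempty := Finset.univ_nonempty
  -- the key function
  set g : B → Y → ℕ := fun a y =>
    Finset.univ.inf' hne (fun k : Fin K => (M k a y - 1) * K + (k.val + 1)) with hgdef
  have hM1 : ∀ k (a : B) (y : Y), 1 ≤ M k a y := fun k a y =>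
    (Finset.mem_Icc.mp (hrange k y a)).1
  have hg1 : ∀ (a : B) (y : Y), 1 ≤ g a y := by
    intro a y
    apply Finset.le_inf'
    intro k _
    omega
  have hgle : ∀ (a : B) (y : Y) (k : Fin K), g a y ≤ (M k a y - 1) * K + (k.val + 1) :=
    fun a y k => Finset.inf'_le _ (Finset.mem_univ k)
  -- key injectivity
  have hginj : ∀ y : Y, Function.Injective (fun a => g a y) := by
    intro y a b hab
    simp only at hab
    obtain ⟨k₁, -, h₁⟩ := Finset.exists_mem_eq_inf' hne
      (fun k : Fin K => (M k a y - 1) * K + (k.val + 1))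
    obtain ⟨k₂, -, h₂⟩ := Finset.exists_mem_eq_inf' hne
      (fun k : Fin K => (M k b y - 1) * K + (k.val + 1))
    have heq : (M k₁ a y - 1) * K + k₁.val = (M k₂ b y - 1) * K + k₂.val := by
      have : g a y = (M k₁ a y - 1) * K + (k₁.val + 1) := h₁
      have : g b y = (M k₂ b y - 1) * K + (k₂.val + 1) := h₂
      omega
    have hk : k₁.val = k₂.val := by
      have e1 : ((M k₁ a y - 1) * K + k₁.val) % K = k₁.val % K := Nat.mul_add_mod' _ _ _
      have e2 : ((M k₂ b y - 1) * K + k₂.val) % K = k₂.val % K := Nat.mul_add_mod' _ _ _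
      rw [Nat.mod_eq_of_lt k₁.isLt] at e1
      rw [Nat.mod_eq_of_lt k₂.isLt] at e2
      rw [heq, e2] at e1
      omega
    have hkeq : k₁ = k₂ := Fin.ext hk
    subst hkeq
    have hmul : (M k₁ a y - 1) * K = (M k₁ b y - 1) * K := by omega
    have hsub : M k₁ a y - 1 = M k₁ b y - 1 :=
      Nat.eq_of_mul_eq_mul_right hK hmul
    have hMeq : M k₁ a y = M k₁ b y := by
      have := hM1 k₁ a y; have := hM1 k₁ b y; omega
    exact hinj k₁ y hMeq
  -- the merged ranking: rank according to g
  refine ⟨fun a y => 1 + (Finset.univ.filter (fun b => g b y < g a y)).card, ?_, ?_, ?_, ?_⟩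
  · intro y a
    dsimp only
    rw [Finset.mem_Icc]
    constructor
    · omega
    · have hsub : (Finset.univ.filter (fun b => g b y < g a y)) ⊆ Finset.univ.erase a := by
        intro b hb
        rw [Finset.mem_filter] at hb
        refine Finset.mem_erase.mpr ⟨?_, Finset.mem_univ b⟩
        rintro rfl; omega
      have h1 := Finset.card_le_card hsub
      rw [Finset.card_erase_of_mem (Finset.mem_univ a), Finset.card_univ] at h1
      have : 0 < Fintype.card B := Fintype.card_pos_iff.mpr ⟨a⟩
      omega
  · intro y a b hab
    dsimp only at hab
    by_contra hne'
    have hgne : g a y ≠ g b y := fun h => hne' (hginj y h)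
    -- a strictly monotone rank argument
    have key : ∀ u v : B, g u y < g v y →
        (Finset.univ.filter (fun c => g c y < g u y)).card <
        (Finset.univ.filter (fun c => g c y < g v y)).card := by
      intro u v huv
      apply Finset.card_lt_card
      rw [Finset.ssubset_iff_of_subset]
      · exact ⟨u, Finset.mem_filter.mpr ⟨Finset.mem_univ u, huv⟩,
          fun h => by have := (Finset.mem_filter.mp h).2; omega⟩
      · intro c hc
        rw [Finset.mem_filter] at hc ⊢
        exact ⟨hc.1, hc.2.trans huv⟩
    rcases lt_or_gt_of_ne hgne with h | h
    · have := key a b h; omega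
    · have := key b a h; omega
  · intro a y k
    dsimp only
    have hcard : (Finset.univ.filter (fun b => g b y < g a y)).card ≤ g a y - 1 := by
      have hmaps : ∀ b ∈ Finset.univ.filter (fun b => g b y < g a y),
          g b y ∈ Finset.Ico 1 (g a y) := by
        intro b hb
        rw [Finset.mem_filter] at hb
        exact Finset.mem_Ico.mpr ⟨hg1 b y, hb.2⟩
      have := Finset.card_le_card_of_injOn (fun b => g b y) hmaps
        (fun b₁ _ b₂ _ h => hginj y h)
      simpa using this
    have := hgle a y k
    have := hg1 a y
    omega
  · intro a y k
    dsimp only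
    have h1 := hgle a y k
    have hcard : (Finset.univ.filter (fun b => g b y < g a y)).card ≤ g a y - 1 := by
      have hmaps : ∀ b ∈ Finset.univ.filter (fun b => g b y < g a y),
          g b y ∈ Finset.Ico 1 (g a y) := by
        intro b hb
        rw [Finset.mem_filter] at hb
        exact Finset.mem_Ico.mpr ⟨hg1 b y, hb.2⟩
      have := Finset.card_le_card_of_injOn (fun b => g b y) hmaps
        (fun b₁ _ b₂ _ h => hginj y h)
      simpa using this
    have h2 : (M k a y - 1) * K + (k.val + 1) ≤ K * M k a y := by
      have hm := hM1 k a y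
      have hk1 : k.val + 1 ≤ K := k.isLt
      have heq : (M k a y - 1 + 1) * K = K * M k a y := by
        rw [Nat.sub_add_cancel hm, Nat.mul_comm]
      calc (M k a y - 1) * K + (k.val + 1) ≤ (M k a y - 1) * K + K := by omega
        _ = (M k a y - 1 + 1) * K := by ring
        _ = K * M k a y := heq
    have := hg1 a y
    omega
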